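/- Let p ≥ 5 be prime and let c : Z_p → {R,Y,G,B} be a surjective rainbow Sidon free coloring such that: R is dominant, R is not 2-dominant, Y is 2-dominant, and the pattern YRB appears. Then the pattern YY does not appear: there is no x ∈ Z_p with c(x) = c(x+1) = Y. -/

import Mathlib

/-- `c` admits a rainbow solution to the Sidon equation `x₁ + x₂ = x₃ + x₄`:
a solution whose four colors are pairwise distinct. -/
def HasRainbowSidon {n : ℕ} {α : Type*} (c : ZMod n → α) : Prop :=
  ∃ x₁ x₂ x₃ x₄ : ZMod n, x₁ + x₂ = x₃ + x₄ ∧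
    c x₁ ≠ c x₂ ∧ c x₁ ≠ c x₃ ∧ c x₁ ≠ c x₄ ∧
    c x₂ ≠ c x₃ ∧ c x₂ ≠ c x₄ ∧ c x₃ ≠ c x₄

/-- The rainbow number `rb(ℤ_n, S)` of `ℤ_n` for the Sidon equation: the least `r > 0`
such that every exact (surjective) `r`-coloring of `ℤ_n` admits a rainbow Sidon solution.
(When no such `r` exists, `r = n + 1` belongs to the set vacuously, matching the
convention `rb(ℤ_n, S) = n + 1`.) -/
noncomputable def rbSidon (n : ℕ) : ℕ :=
  sInf {r : ℕ | 0 < r ∧ ∀ c : ZMod n → Fin r, Function.Surjective c → HasRainbowSidon c}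

/-- The four colors used in Section 2. -/
inductive Color : Type
  | R | Y | G | B
deriving DecidableEq

theorem no_YY (p : ℕ) (hp : p.Prime) (hp5 : 5 ≤ p)
    (c : ZMod p → Color) (hsurj : Function.Surjective c)
    (hfree : ¬ HasRainbowSidon c)
    (hRdom : ∀ x : ZMod p, c x = c (x + 1) ∨ c x = Color.R ∨ c (x + 1) = Color.R)
    (hRnot2dom : ¬ ∀ x : ZMod p, c x = c (x + 2) ∨ c x = Color.R ∨ c (x + 2) = Color.R)
    (hY2dom : ∀ x : ZMod p, c x = c (x + 2) ∨ c x = Color.Y ∨ c (x + 2) = Color.Y)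
    (hYRB : ∃ j : ZMod p, c j = Color.Y ∧ c (j + 1) = Color.R ∧ c (j + 2) = Color.B)
    : ∀ x : ZMod p, ¬ (c x = Color.Y ∧ c (x + 1) = Color.Y) := by
  haveI : Fact p.Prime := ⟨hp⟩
  obtain ⟨j, hj0, hj1, hj2⟩ := hYRB
  obtain ⟨g, hg⟩ := hsurj Color.G
  rintro x ⟨hx0, hx1⟩
  -- Step 1: a color other than R, Y cannot occupy two adjacent cells.
  have hconst : ∀ X : Color, X ≠ Color.R → X ≠ Color.Y →
      ∀ u : ZMod p, c u = X → c (u + 1) = X → False := by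
    intro X hXR hXY u h0 h1
    have key : ∀ k : ℕ, c (u + (k : ZMod p)) = X ∧ c (u + (k : ZMod p) + 1) = X := by
      intro k
      induction k with
      | zero => simpa using ⟨h0, h1⟩
      | succ n ih =>
        obtain ⟨ha, hb⟩ := ih
        have c2 : c (u + (n : ZMod p) + 2) = X := by
          have hd := hRdom (u + (n : ZMod p) + 1)
          have hy := hY2dom (u + (n : ZMod p))
          have e3 : u + (n : ZMod p) + 1 + 1 = u + (n : ZMod p) + 2 := by ring
          rw [e3] at hd
          rcases hd with hd | hd | hd
          · rw [← hd]; exact hb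
          · exact absurd (hb ▸ hd) hXR
          · rcases hy with hy | hy | hy
            · exact absurd (ha.symm.trans (hy.trans hd)) hXR
            · exact absurd (ha ▸ hy) hXY
            · rw [hy] at hd; cases hd
        constructor <;> push_cast
        · rw [← add_assoc]; exact hb
        · rw [show u + ((n : ZMod p) + 1) + 1 = u + (n : ZMod p) + 2 from by ring]; exact c2
    have hall : ∀ v : ZMod p, c v = X := by
      intro v
      have := (key ((v - u).val)).1
      rwa [ZMod.natCast_val, ZMod.cast_id, add_sub_cancel] at this
    exact hXR ((hall (j + 1)).symm.trans hj1)
  -- Step 2: two adjacent non-R cells are both Y.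
  have pairY : ∀ u : ZMod p, c u ≠ Color.R → c (u + 1) ≠ Color.R →
      c u = Color.Y ∧ c (u + 1) = Color.Y := by
    intro u h0 h1
    have heq : c u = c (u + 1) := by
      rcases hRdom u with h | h | h
      · exact h
      · exact absurd h h0
      · exact absurd h h1
    by_cases hcy : c u = Color.Y
    · exact ⟨hcy, heq ▸ hcy⟩
    · exact absurd (hconst (c u) h0 hcy u rfl heq.symm) id
  -- Step 3: if c y = Y, then c (y + g - (j+2)) ≠ R (else rainbow Y,G,R,B).
  have hstep : ∀ y : ZMod p, c y = Color.Y → c (y + g - (j + 2)) ≠ Color.R := by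
    intro y hy hr
    apply hfree
    refine ⟨y, g, y + g - (j + 2), j + 2, by ring, ?_, ?_, ?_, ?_, ?_, ?_⟩ <;>
      simp [hy, hg, hr, hj2]
  -- Step 4: YY propagates by translation τ = g - (j+2).
  set τ : ZMod p := g - (j + 2) with hτdef
  have hYYstep : ∀ z : ZMod p, c z = Color.Y → c (z + 1) = Color.Y →
      c (z + τ) = Color.Y ∧ c (z + τ + 1) = Color.Y := by
    intro z h0 h1
    have n0 : c (z + τ) ≠ Color.R := by
      have := hstep z h0
      rwa [show z + g - (j + 2) = z + τ by rw [hτdef]; ring] at this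
    have n1 : c (z + τ + 1) ≠ Color.R := by
      have := hstep (z + 1) h1
      rwa [show z + 1 + g - (j + 2) = z + τ + 1 by rw [hτdef]; ring] at this
    exact pairY (z + τ) n0 n1
  have hiter : ∀ k : ℕ, c (x + (k : ZMod p) * τ) = Color.Y ∧
      c (x + (k : ZMod p) * τ + 1) = Color.Y := by
    intro k
    induction k with
    | zero => simpa using ⟨hx0, hx1⟩
    | succ n ih =>
      obtain ⟨ha, hb⟩ := ih
      have := hYYstep (x + (n : ZMod p) * τ) ha hb
      have e : x + ((n : ℕ) + 1 : ℕ) * τ = x + (n : ZMod p) * τ + τ := by push_cast; ring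
      rw [e]
      exact this
  -- Step 5: τ ≠ 0, so iteration reaches j + 1, contradicting c (j+1) = R.
  have hτ : τ ≠ 0 := by
    intro h
    have : g = j + 2 := by
      have := sub_eq_zero.mp (hτdef ▸ h)
      exact this
    rw [this, hj2] at hg
    exact absurd hg (by decide)
  have hk : x + (((j + 1 - x) * τ⁻¹).val : ZMod p) * τ = j + 1 := by
    rw [ZMod.natCast_val, ZMod.cast_id]
    field_simp
    ring
  have := (hiter (((j + 1 - x) * τ⁻¹).val)).1
  rw [hk, hj1] at this
  exact absurd this (by decide)
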